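/- Let G be a finite simple graph on a finite vertex set V such that for every proper subset S ⊊ V, the distinguishing number of the induced subgraph of G on S is not equal to the distinguishing number of G (i.e., G is distinguishing critical). Then the automorphism group of G acts transitively on V: for any two vertices v, w of G there is a graph automorphism of G sending v to w. -/

import Mathlib

/-- The distinguishing number of a simple graph `G`: the least number `r` of labels
such that some labeling `φ : V → Fin r` is preserved only by automorphisms of `G`
that fix every vertex. -/
noncomputable def distinguishingNumber {V : Type*} (G : SimpleGraph V) : ℕ :=
  sInf {r : ℕ | ∃ φ : V → Fin r,
    ∀ e : G ≃g G, (∀ v, φ (e v) = φ v) → ∀ v, e v = v}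

section Aux

variable {W : Type*}

/-- The set of numbers of colors admitting a distinguishing labeling. -/
def distSet (H : SimpleGraph W) : Set ℕ :=
  {r : ℕ | ∃ φ : W → Fin r, ∀ e : H ≃g H, (∀ v, φ (e v) = φ v) → ∀ v, e v = v}

lemma distinguishingNumber_def (H : SimpleGraph W) :
    distinguishingNumber H = sInf (distSet H) := rfl

lemma distSet_mono {H : SimpleGraph W} {r r' : ℕ} (h : r ∈ distSet H) (hle : r ≤ r') :
    r' ∈ distSet H := by
  obtain ⟨φ, hφ⟩ := h
  refine ⟨fun x => (φ x).castLE hle, fun e he => hφ e fun v => ?_⟩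
  have := he v
  exact Fin.castLE_inj.mp this

lemma distSet_nonempty [Fintype W] (H : SimpleGraph W) : (distSet H).Nonempty := by
  refine ⟨Fintype.card W, fun x => Fintype.equivFin W x, fun e he v => ?_⟩
  exact (Fintype.equivFin W).injective (he v)

lemma exists_labeling [Fintype W] (H : SimpleGraph W) {r : ℕ}
    (h : distinguishingNumber H ≤ r) : r ∈ distSet H :=
  distSet_mono (Nat.sInf_mem (distSet_nonempty H)) h

/-- Restrict an automorphism to an invariant set of vertices. -/
def restrictIso (H : SimpleGraph W) (S : Set W) (e : H ≃g H)
    (hS : ∀ x, e x ∈ S ↔ x ∈ S) : H.induce S ≃g H.induce S where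
  toFun x := ⟨e x, (hS x).2 x.2⟩
  invFun x := ⟨e.symm x, (hS (e.symm x)).1 (by simpa using x.2)⟩
  left_inv x := Subtype.ext (by simp)
  right_inv x := Subtype.ext (by simp)
  map_rel_iff' := by
    intro a b
    simp only [SimpleGraph.comap_adj, Equiv.coe_fn_mk]
    exact e.map_rel_iff

lemma distSet_map {W' : Type*} {H : SimpleGraph W} {H' : SimpleGraph W'} (f : H ≃g H')
    {r : ℕ} (h : r ∈ distSet H) : r ∈ distSet H' := by
  obtain ⟨φ, hφ⟩ := h
  refine ⟨fun x => φ (f.symm x), fun e' he' v => ?_⟩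
  have key := hφ ((f.trans e').trans f.symm) (fun x => by
    have h1 := he' (f x)
    simpa using h1) (f.symm v)
  have : f.symm (e' (f (f.symm v))) = f.symm v := key
  simpa using f.symm.injective (by simpa using this)

lemma dn_congr {W' : Type*} [Fintype W] [Fintype W'] {H : SimpleGraph W}
    {H' : SimpleGraph W'} (f : H ≃g H') :
    distinguishingNumber H = distinguishingNumber H' := by
  apply le_antisymm
  · exact Nat.sInf_le (distSet_map f.symm (Nat.sInf_mem (distSet_nonempty H')))
  · exact Nat.sInf_le (distSet_map f (Nat.sInf_mem (distSet_nonempty H)))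

/-- Deleting a vertex decreases the distinguishing number by at most one. -/
lemma deleteOne [Fintype W] (H : SimpleGraph W) (u : W) :
    distinguishingNumber H ≤ distinguishingNumber (H.induce {x | x ≠ u}) + 1 := by
  classical
  set r := distinguishingNumber (H.induce {x | x ≠ u}) with hr
  obtain ⟨φ, hφ⟩ : r ∈ distSet _ := Nat.sInf_mem (distSet_nonempty (H.induce {x | x ≠ u}))
  refine Nat.sInf_le ⟨fun x => if h : x = u then Fin.last r else (φ ⟨x, h⟩).castSucc,
    fun e he => ?_⟩
  have hu : e u = u := by
    by_contra hne
    have h1 := he u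
    simp only [dif_neg hne] at h1
    rw [dif_pos trivial] at h1
    exact absurd h1 (Fin.castSucc_lt_last _).ne
  have hSiff : ∀ x, e x ∈ {x | x ≠ u} ↔ x ∈ {x | x ≠ u} := by
    intro x
    simp only [Set.mem_setOf_eq]
    constructor
    · intro h hx
      exact h (by rw [hx, hu])
    · intro hx h
      exact hx (e.injective (h.trans hu.symm))
  have hpre : ∀ y : {x | x ≠ u}, φ (restrictIso H _ e hSiff y) = φ y := by
    rintro ⟨y, hy⟩
    have hey : e y ≠ u := (hSiff y).2 hy
    have hy' : y ≠ u := hy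
    have h1 := he y
    simp only [dif_neg hy', dif_neg hey] at h1
    exact Fin.castSucc_injective _ h1
  have hfix := hφ (restrictIso H _ e hSiff) hpre
  intro x
  by_cases hx : x = u
  · rw [hx, hu]
  · exact congrArg Subtype.val (hfix ⟨x, hx⟩)

end Aux

section Subsets

variable {V : Type*} [Fintype V] (G : SimpleGraph V)

/-- Iso between the sub-subgraph and the induced subgraph on the smaller set. -/
def subIso (S : Set V) (u : V) (hu : u ∈ S) :
    ((G.induce S).induce {x : ↥S | x ≠ ⟨u, hu⟩}) ≃g (G.induce (S \ {u})) where
  toFun x := ⟨x.1.1, x.1.2, fun h => x.2 (Subtype.ext h)⟩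
  invFun y := ⟨⟨y.1, y.2.1⟩, fun h => y.2.2 (congrArg Subtype.val h)⟩
  left_inv x := rfl
  right_inv y := rfl
  map_rel_iff' := Iff.rfl

lemma deleteOne_subset {S : Set V} {u : V} (hu : u ∈ S) :
    distinguishingNumber (G.induce S) ≤ distinguishingNumber (G.induce (S \ {u})) + 1 := by
  classical
  have h1 := deleteOne (G.induce S) (⟨u, hu⟩ : ↥S)
  have h2 := dn_congr (subIso G S u hu)
  omega

lemma dn_empty : distinguishingNumber (G.induce (∅ : Set V)) = 0 :=
  Nat.eq_zero_of_le_zero (Nat.sInf_le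
    ⟨fun x => absurd x.2 (Set.notMem_empty _),
     fun e _ y => absurd y.2 (Set.notMem_empty _)⟩)

/-- Discrete intermediate value property: every value up to `D(G[S])` is achieved by
the distinguishing number of an induced subgraph of `G[S]`. -/
lemma ivt : ∀ (n : ℕ) (S : Set V), S.ncard ≤ n →
    ∀ t ≤ distinguishingNumber (G.induce S),
      ∃ T ⊆ S, distinguishingNumber (G.induce T) = t := by
  intro n
  induction n with
  | zero =>
    intro S hcard t ht
    have hS : S = ∅ := (Set.ncard_eq_zero (Set.toFinite S)).mp (Nat.le_zero.mp hcard)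
    subst hS
    rw [dn_empty] at ht
    exact ⟨∅, subset_rfl, by rw [dn_empty]; omega⟩
  | succ n ih =>
    intro S hcard t ht
    rcases eq_or_lt_of_le ht with h | h
    · exact ⟨S, subset_rfl, h.symm⟩
    · have hS : S.Nonempty := by
        rcases Set.eq_empty_or_nonempty S with h0 | h0
        · subst h0; rw [dn_empty] at h; omega
        · exact h0
      obtain ⟨u, hu⟩ := hS
      have hdel := deleteOne_subset G hu
      have h2 : t ≤ distinguishingNumber (G.induce (S \ {u})) := by omega
      have hc : (S \ {u}).ncard ≤ n := by
        have := Set.ncard_diff_singleton_lt_of_mem hu (Set.toFinite S)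
        omega
      obtain ⟨T, hT1, hT2⟩ := ih (S \ {u}) hc t h2
      exact ⟨T, hT1.trans Set.diff_subset, hT2⟩

end Subsets

/-- If a finite simple graph is distinguishing critical (every proper induced subgraph has a
different distinguishing number), then its automorphism group acts transitively on vertices. -/
theorem distinguishing_critical_transitive {V : Type*} [Fintype V] (G : SimpleGraph V)
    (hcrit : ∀ S : Set V, S ⊂ Set.univ →
      distinguishingNumber (G.induce S) ≠ distinguishingNumber G) :
    ∀ v w : V, ∃ e : G ≃g G, e v = w := by
  classical
  intro v w
  by_contra hcon
  push_neg at hcon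
  set d := distinguishingNumber G with hd
  have hd0 : 1 ≤ d := by
    by_contra h
    have hd' : d = 0 := by omega
    have hmem0 : d ∈ distSet G := Nat.sInf_mem (distSet_nonempty G)
    rw [hd'] at hmem0
    obtain ⟨φ, -⟩ := hmem0
    exact (φ v).elim0
  have hlow : ∀ S : Set V, S ⊂ Set.univ → distinguishingNumber (G.induce S) ≤ d - 1 := by
    intro S hS
    by_contra h
    have h' : d ≤ distinguishingNumber (G.induce S) := by omega
    obtain ⟨T, hT, hTd⟩ := ivt G S.ncard S le_rfl d h'
    exact hcrit T (lt_of_le_of_lt hT hS) hTd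
  -- the orbit of v
  set O : Set V := {x | ∃ e : G ≃g G, e v = x} with hO
  have hvO : v ∈ O := ⟨RelIso.refl _, rfl⟩
  have hwO : w ∉ O := by
    rintro ⟨e, he⟩
    exact hcon e he
  have hinv : ∀ (e : G ≃g G) (x : V), x ∈ O → e x ∈ O := by
    rintro e x ⟨f, hf⟩
    exact ⟨f.trans e, by simp [RelIso.trans_apply, hf]⟩
  have hOiff : ∀ (e : G ≃g G) (x : V), e x ∈ O ↔ x ∈ O := by
    intro e x
    constructor
    · intro h
      have := hinv e.symm _ h
      simpa using this
    · exact hinv e x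
  have hS1 : Oᶜ ⊂ Set.univ := by
    rw [Set.ssubset_univ_iff]
    intro h
    have : v ∈ Oᶜ := h ▸ Set.mem_univ v
    exact this hvO
  have hS2 : ({w}ᶜ : Set V) ⊂ Set.univ := by
    rw [Set.ssubset_univ_iff]
    intro h
    have : w ∈ ({w}ᶜ : Set V) := h ▸ Set.mem_univ w
    exact this rfl
  obtain ⟨φ₁, hφ₁⟩ := exists_labeling (G.induce Oᶜ) (hlow Oᶜ hS1)
  obtain ⟨φ₂, hφ₂⟩ := exists_labeling (G.induce ({w}ᶜ : Set V)) (hlow _ hS2)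
  have hmem : (d - 1) ∈ distSet G := by
    refine ⟨fun x => if h : x ∈ O then φ₂ ⟨x, fun hx => hwO (Set.mem_singleton_iff.mp hx ▸ h)⟩
      else φ₁ ⟨x, h⟩, fun e he => ?_⟩
    -- Step 1: e fixes the complement of the orbit pointwise
    have h1iff : ∀ x, e x ∈ Oᶜ ↔ x ∈ Oᶜ := by
      intro x
      simp only [Set.mem_compl_iff]
      exact not_congr (hOiff e x)
    have hfix1 : ∀ x, x ∉ O → e x = x := by
      have hpre : ∀ y : ↑(Oᶜ), φ₁ (restrictIso G Oᶜ e h1iff y) = φ₁ y := by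
        rintro ⟨y, hy⟩
        have hey : e y ∉ O := (h1iff y).2 hy
        have hy' : y ∉ O := hy
        have h1 := he y
        simp only [dif_neg hy', dif_neg hey] at h1
        exact h1
      have hfix := hφ₁ (restrictIso G Oᶜ e h1iff) hpre
      intro x hx
      exact congrArg Subtype.val (hfix ⟨x, hx⟩)
    -- Step 2: e fixes the complement of {w} pointwise
    have h2iff : ∀ x, e x ∈ ({w}ᶜ : Set V) ↔ x ∈ ({w}ᶜ : Set V) := by
      intro x
      simp only [Set.mem_compl_iff, Set.mem_singleton_iff]
      constructor
      · intro h hx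
        subst hx
        exact h (hfix1 x hwO)
      · intro hx h
        by_cases hxO : x ∈ O
        · exact hwO (h ▸ hinv e x hxO)
        · exact hx ((hfix1 x hxO).symm.trans h)
    have hfix2 : ∀ x, x ≠ w → e x = x := by
      have hpre : ∀ y : ↑({w}ᶜ : Set V),
          φ₂ (restrictIso G ({w}ᶜ : Set V) e h2iff y) = φ₂ y := by
        rintro ⟨y, hy⟩
        by_cases hyO : y ∈ O
        · have heyO : e y ∈ O := hinv e y hyO
          have h1 := he y
          simp only [dif_pos hyO, dif_pos heyO] at h1
          exact h1
        · have hey : e y = y := hfix1 y hyO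
          have : restrictIso G ({w}ᶜ : Set V) e h2iff ⟨y, hy⟩ = ⟨y, hy⟩ :=
            Subtype.ext hey
          rw [this]
      have hfix := hφ₂ (restrictIso G ({w}ᶜ : Set V) e h2iff) hpre
      intro x hx
      exact congrArg Subtype.val (hfix ⟨x, hx⟩)
    intro x
    by_cases hx : x = w
    · subst hx
      exact hfix1 x hwO
    · exact hfix2 x hx
  have : d ≤ d - 1 := Nat.sInf_le hmem
  omega
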